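/- Let ρ ∈ (−1,1) and u, v ∈ ℝ. Then ∫_u^∞ ∫_v^∞ x·y · f_ρ(x,y) dy dx = ρ·ℓ(u,v,ρ) + ρ·u·φ(u)·Φ̄((v − ρu)/√(1−ρ²)) + ρ·v·φ(v)·Φ̄((u − ρv)/√(1−ρ²)) + (√(1−ρ²)/√(2π))·φ(√(u² − 2ρuv + v²)/√(1−ρ²)). -/

import Mathlib

open MeasureTheory Set Filter

/-- Density of the standard normal distribution. -/
noncomputable def stdNormalPDF (x : ℝ) : ℝ :=
  (Real.sqrt (2 * Real.pi))⁻¹ * Real.exp (-x ^ 2 / 2)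

/-- Survival function of the standard normal distribution. -/
noncomputable def stdNormalSurv (x : ℝ) : ℝ :=
  ∫ t in Set.Ioi x, stdNormalPDF t

/-- Density of the standard bivariate normal distribution with correlation `ρ`. -/
noncomputable def bvnPDF (ρ x y : ℝ) : ℝ :=
  (2 * Real.pi * Real.sqrt (1 - ρ ^ 2))⁻¹ *
    Real.exp (-(x ^ 2 - 2 * ρ * x * y + y ^ 2) / (2 * (1 - ρ ^ 2)))

/-- Total probability of the truncated standard bivariate normal distribution. -/
noncomputable def ell (u v ρ : ℝ) : ℝ :=
  ∫ x in Set.Ioi u, ∫ y in Set.Ioi v, bvnPDF ρ x y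

lemma phi_nonneg (x : ℝ) : 0 ≤ stdNormalPDF x := by
  unfold stdNormalPDF; positivity

lemma sqrt_two_pi_pos : 0 < Real.sqrt (2 * Real.pi) :=
  Real.sqrt_pos.2 (by positivity)

lemma phi_le_one (x : ℝ) : stdNormalPDF x ≤ 1 := by
  unfold stdNormalPDF
  have h1 : Real.exp (-x ^ 2 / 2) ≤ 1 := Real.exp_le_one_iff.2 (by nlinarith [sq_nonneg x])
  have h2 : (Real.sqrt (2 * Real.pi))⁻¹ ≤ 1 := by
    rw [inv_le_one_iff₀]
    right
    rw [show (1:ℝ) = Real.sqrt 1 from (Real.sqrt_one).symm]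
    exact Real.sqrt_le_sqrt (by nlinarith [Real.pi_gt_three])
  calc (Real.sqrt (2 * Real.pi))⁻¹ * Real.exp (-x ^ 2 / 2) ≤ 1 * 1 := by
        apply mul_le_mul h2 h1 (by positivity) (by norm_num)
    _ = 1 := by norm_num

lemma phi_eq (x : ℝ) : stdNormalPDF x
    = (Real.sqrt (2 * Real.pi))⁻¹ * Real.exp (-(1/2) * x ^ 2) := by
  unfold stdNormalPDF; ring_nf

lemma integrable_phi : Integrable stdNormalPDF := by
  have := (integrable_exp_neg_mul_sq (show (0:ℝ) < 1/2 by norm_num)).const_mul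
    (Real.sqrt (2 * Real.pi))⁻¹
  apply this.congr
  filter_upwards with x
  rw [phi_eq]

lemma continuous_phi : Continuous stdNormalPDF := by
  unfold stdNormalPDF
  continuity

lemma hasDerivAt_phi (x : ℝ) : HasDerivAt stdNormalPDF (-x * stdNormalPDF x) x := by
  have h1 : HasDerivAt (fun x : ℝ => -x ^ 2 / 2) (-x) x := by
    have := ((hasDerivAt_pow 2 x).neg).div_const 2
    simpa using this.congr_deriv (by ring)
  have := ((h1.exp).const_mul (Real.sqrt (2 * Real.pi))⁻¹)
  unfold stdNormalPDF
  convert this using 1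
  · rfl
  · rfl
  ring

lemma tendsto_phi_atTop : Tendsto stdNormalPDF atTop (nhds 0) := by
  have h1 : Tendsto (fun x : ℝ => -x ^ 2 / 2) atTop atBot := by
    apply Tendsto.atBot_div_const (by norm_num)
    exact tendsto_neg_atBot_iff.mpr (tendsto_pow_atTop two_ne_zero)
  have := (Real.tendsto_exp_atBot.comp h1).const_mul (Real.sqrt (2 * Real.pi))⁻¹
  unfold stdNormalPDF
  simpa only [Function.comp_def, mul_zero] using this

lemma integral_phi : ∫ x, stdNormalPDF x = 1 := by
  simp_rw [phi_eq]
  rw [MeasureTheory.integral_const_mul, integral_gaussian]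
  rw [show Real.pi / (1/2) = 2 * Real.pi by ring]
  rw [inv_mul_cancel₀ (ne_of_gt sqrt_two_pi_pos)]

lemma surv_nonneg (x : ℝ) : 0 ≤ stdNormalSurv x :=
  setIntegral_nonneg measurableSet_Ioi (fun t _ => phi_nonneg t)

lemma surv_le_one (x : ℝ) : stdNormalSurv x ≤ 1 := by
  rw [← integral_phi]
  exact setIntegral_le_integral integrable_phi (Eventually.of_forall phi_nonneg)


lemma integral_Ioi_split {h : ℝ → ℝ} (hint : Integrable h) (c x : ℝ) :
    ∫ t in Ioi x, h t = (∫ t in Ioi c, h t) - ∫ t in c..x, h t := by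
  have key : ∀ a b : ℝ, a ≤ b →
      (∫ t in Ioi a, h t) = (∫ t in Ioc a b, h t) + ∫ t in Ioi b, h t := by
    intro a b hab
    rw [← setIntegral_union (Ioc_disjoint_Ioi le_rfl) measurableSet_Ioi
      hint.integrableOn hint.integrableOn, Ioc_union_Ioi_eq_Ioi hab]
  rcases le_total c x with hcx | hxc
  · rw [intervalIntegral.integral_of_le hcx, key c x hcx]; ring
  · rw [intervalIntegral.integral_symm, intervalIntegral.integral_of_le hxc, key x c hxc]; ring

lemma hasDerivAt_integral_Ioi {h : ℝ → ℝ} (hint : Integrable h) (hcont : Continuous h)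
    (x : ℝ) : HasDerivAt (fun y => ∫ t in Ioi y, h t) (-(h x)) x := by
  have heq : (fun y => ∫ t in Ioi y, h t)
      = fun y => (∫ t in Ioi (0:ℝ), h t) - ∫ t in (0:ℝ)..y, h t := by
    funext y; exact integral_Ioi_split hint 0 y
  rw [heq]
  have hd : HasDerivAt (fun y => ∫ t in (0:ℝ)..y, h t) (h x) x :=
    intervalIntegral.integral_hasDerivAt_right hint.intervalIntegrable
      hcont.aestronglyMeasurable.stronglyMeasurableAtFilter hcont.continuousAt
  exact ((hasDerivAt_const x (∫ t in Ioi (0:ℝ), h t)).sub hd).congr_deriv (by simp)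

lemma tendsto_integral_Ioi {h : ℝ → ℝ} (hint : Integrable h) :
    Tendsto (fun y => ∫ t in Ioi y, h t) atTop (nhds 0) := by
  have h1 := MeasureTheory.intervalIntegral_tendsto_integral_Ioi 0 hint.integrableOn tendsto_id
  have h2 : Tendsto (fun y : ℝ => (∫ t in Ioi (0:ℝ), h t) - ∫ t in (0:ℝ)..y, h t) atTop
      (nhds ((∫ t in Ioi (0:ℝ), h t) - ∫ t in Ioi (0:ℝ), h t)) := tendsto_const_nhds.sub h1
  rw [sub_self] at h2
  apply h2.congr
  intro y
  exact (integral_Ioi_split hint 0 y).symm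

lemma hasDerivAt_surv (x : ℝ) : HasDerivAt stdNormalSurv (-(stdNormalPDF x)) x := by
  have := hasDerivAt_integral_Ioi integrable_phi continuous_phi x
  exact this

lemma continuous_surv : Continuous stdNormalSurv := by
  have : Differentiable ℝ stdNormalSurv := fun x => (hasDerivAt_surv x).differentiableAt
  exact this.continuous

lemma tendsto_surv_atTop : Tendsto stdNormalSurv atTop (nhds 0) :=
  tendsto_integral_Ioi integrable_phi

lemma integrable_phi_affine (c s : ℝ) (hs : s ≠ 0) :
    Integrable fun y => stdNormalPDF ((y - c) / s) := by
  have h0 : Integrable fun t : ℝ => stdNormalPDF (t / s) := by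
    have := (integrable_exp_neg_mul_sq
      (show (0:ℝ) < 1 / (2 * s ^ 2) by positivity)).const_mul (Real.sqrt (2 * Real.pi))⁻¹
    apply this.congr
    filter_upwards with t
    unfold stdNormalPDF
    rw [div_pow]
    congr 1
    rw [Real.exp_eq_exp]
    ring
  exact h0.comp_sub_right c

lemma integrable_mul_phi_affine (c s : ℝ) (hs : s ≠ 0) :
    Integrable fun y => y * stdNormalPDF ((y - c) / s) := by
  have h0 : Integrable fun t : ℝ => t * stdNormalPDF (t / s) := by
    have := (integrable_mul_exp_neg_mul_sq
      (show (0:ℝ) < 1 / (2 * s ^ 2) by positivity)).const_mul (Real.sqrt (2 * Real.pi))⁻¹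
    apply this.congr
    filter_upwards with t
    unfold stdNormalPDF
    rw [div_pow]
    rw [show -(t ^ 2 / s ^ 2) / 2 = -(1 / (2 * s ^ 2)) * t ^ 2 by ring]
    ring
  have h1 := h0.comp_sub_right c
  have h2 := (integrable_phi_affine c s hs).const_mul c
  have h3 := h1.add h2
  apply h3.congr
  filter_upwards with y
  simp only [Pi.add_apply]
  ring

lemma integrable_sq_mul_phi : Integrable fun x => x ^ 2 * stdNormalPDF x := by
  have := (integrable_rpow_mul_exp_neg_mul_sq (show (0:ℝ) < 1/2 by norm_num)
    (show (-1:ℝ) < 2 by norm_num)).const_mul (Real.sqrt (2 * Real.pi))⁻¹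
  apply this.congr
  filter_upwards with x
  rw [show ((2:ℝ)) = ((2:ℕ):ℝ) by norm_num, Real.rpow_natCast, phi_eq]
  ring

lemma bvn_factor {ρ s : ℝ} (hs : 0 < s) (hs2 : s ^ 2 = 1 - ρ ^ 2) (x y : ℝ) :
    bvnPDF ρ x y = stdNormalPDF x * (s⁻¹ * stdNormalPDF ((y - ρ * x) / s)) := by
  have hsqrt : Real.sqrt (1 - ρ ^ 2) = s := by
    rw [← hs2]; exact Real.sqrt_sq hs.le
  have h2π : Real.sqrt (2 * Real.pi) * Real.sqrt (2 * Real.pi) = 2 * Real.pi :=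
    Real.mul_self_sqrt (by positivity)
  have hs0 : s ≠ 0 := ne_of_gt hs
  unfold bvnPDF stdNormalPDF
  rw [hsqrt]
  rw [show -(x ^ 2 - 2 * ρ * x * y + y ^ 2) / (2 * (1 - ρ ^ 2))
      = -x ^ 2 / 2 + -((y - ρ * x) / s) ^ 2 / 2 by
    rw [div_pow, ← hs2]; field_simp; linear_combination x ^ 2 * hs2]
  rw [Real.exp_add]
  rw [show (2 * Real.pi * s)⁻¹
      = (Real.sqrt (2 * Real.pi))⁻¹ * (s⁻¹ * (Real.sqrt (2 * Real.pi))⁻¹) by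
    rw [← mul_inv, ← mul_inv]
    congr 1
    linear_combination (-s) * h2π]
  ring

lemma phi_mul_phi {ρ s : ℝ} (hs : 0 < s) (hs2 : s ^ 2 = 1 - ρ ^ 2) (x v : ℝ) :
    stdNormalPDF v * stdNormalPDF ((x - ρ * v) / s)
      = stdNormalPDF x * stdNormalPDF ((v - ρ * x) / s) := by
  have hs0 : s ≠ 0 := ne_of_gt hs
  unfold stdNormalPDF
  have hexp : Real.exp (-v ^ 2 / 2) * Real.exp (-((x - ρ * v) / s) ^ 2 / 2)
      = Real.exp (-x ^ 2 / 2) * Real.exp (-((v - ρ * x) / s) ^ 2 / 2) := by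
    rw [← Real.exp_add, ← Real.exp_add, Real.exp_eq_exp, div_pow, div_pow]
    field_simp
    linear_combination (x ^ 2 - v ^ 2) * hs2
  linear_combination ((Real.sqrt (2 * Real.pi))⁻¹ * (Real.sqrt (2 * Real.pi))⁻¹) * hexp

lemma hasDerivAt_affine (ρ x s : ℝ) (y : ℝ) :
    HasDerivAt (fun y : ℝ => (y - ρ * x) / s) (1 / s) y := by
  simpa using ((hasDerivAt_id y).sub_const (ρ * x)).div_const s

lemma tendsto_affine_atTop {s : ℝ} (hs : 0 < s) (c : ℝ) :
    Tendsto (fun y : ℝ => (y - c) / s) atTop atTop := by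
  apply Tendsto.atTop_div_const hs
  simpa [sub_eq_add_neg] using tendsto_atTop_add_const_right atTop (-c) tendsto_id

lemma inner_prob {ρ s : ℝ} (hs : 0 < s) (hs2 : s ^ 2 = 1 - ρ ^ 2) (v x : ℝ) :
    (∫ y in Ioi v, bvnPDF ρ x y) = stdNormalPDF x * stdNormalSurv ((v - ρ * x) / s) := by
  have hs0 : s ≠ 0 := ne_of_gt hs
  have hderiv : ∀ y ∈ Ici v, HasDerivAt
      (fun y => -(stdNormalPDF x * stdNormalSurv ((y - ρ * x) / s))) (bvnPDF ρ x y) y := by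
    intro y _
    have h1 : HasDerivAt (fun y : ℝ => stdNormalSurv ((y - ρ * x) / s))
        (-(stdNormalPDF ((y - ρ * x) / s)) * (1 / s)) y :=
      (hasDerivAt_surv _).comp y (hasDerivAt_affine ρ x s y)
    have h2 := (h1.const_mul (stdNormalPDF x)).neg
    convert h2 using 1
    · rfl
    · rfl
    · rfl
    rw [bvn_factor hs hs2]
    field_simp
  have hint : IntegrableOn (fun y => bvnPDF ρ x y) (Ioi v) := by
    have h3 : Integrable (fun y => bvnPDF ρ x y) := by
      apply ((integrable_phi_affine (ρ * x) s hs0).const_mul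
        (stdNormalPDF x * s⁻¹)).congr
      filter_upwards with y
      rw [bvn_factor hs hs2]; ring
    exact h3.integrableOn
  have htend : Tendsto (fun y => -(stdNormalPDF x * stdNormalSurv ((y - ρ * x) / s)))
      atTop (nhds 0) := by
    have := ((tendsto_surv_atTop.comp (tendsto_affine_atTop hs (ρ * x))).const_mul
      (stdNormalPDF x)).neg
    simpa [Function.comp_def] using this
  have := integral_Ioi_of_hasDerivAt_of_tendsto
    ((hderiv v (mem_Ici.2 le_rfl)).continuousAt.continuousWithinAt)
    (fun y hy => hderiv y (mem_Ici.2 (le_of_lt hy))) hint htend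
  rw [this]; ring

lemma inner_moment {ρ s : ℝ} (hs : 0 < s) (hs2 : s ^ 2 = 1 - ρ ^ 2) (v x : ℝ) :
    (∫ y in Ioi v, x * y * bvnPDF ρ x y)
      = ρ * x ^ 2 * stdNormalPDF x * stdNormalSurv ((v - ρ * x) / s)
        + s * x * stdNormalPDF x * stdNormalPDF ((v - ρ * x) / s) := by
  have hs0 : s ≠ 0 := ne_of_gt hs
  have hderiv : ∀ y ∈ Ici v, HasDerivAt
      (fun y => -(x * stdNormalPDF x * (ρ * x * stdNormalSurv ((y - ρ * x) / s)
        + s * stdNormalPDF ((y - ρ * x) / s)))) (x * y * bvnPDF ρ x y) y := by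
    intro y _
    have h1 : HasDerivAt (fun y : ℝ => stdNormalSurv ((y - ρ * x) / s))
        (-(stdNormalPDF ((y - ρ * x) / s)) * (1 / s)) y :=
      (hasDerivAt_surv _).comp y (hasDerivAt_affine ρ x s y)
    have h2 : HasDerivAt (fun y : ℝ => stdNormalPDF ((y - ρ * x) / s))
        (-((y - ρ * x) / s) * stdNormalPDF ((y - ρ * x) / s) * (1 / s)) y :=
      (hasDerivAt_phi _).comp y (hasDerivAt_affine ρ x s y)
    have h3 := (((h1.const_mul (ρ * x)).add (h2.const_mul s)).const_mul
      (x * stdNormalPDF x)).neg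
    convert h3 using 1
    · rfl
    · rfl
    · rfl
    rw [bvn_factor hs hs2]
    field_simp
    ring
  have hint : IntegrableOn (fun y => x * y * bvnPDF ρ x y) (Ioi v) := by
    have h3 : Integrable (fun y => x * y * bvnPDF ρ x y) := by
      apply ((integrable_mul_phi_affine (ρ * x) s hs0).const_mul
        (x * stdNormalPDF x * s⁻¹)).congr
      filter_upwards with y
      rw [bvn_factor hs hs2]; ring
    exact h3.integrableOn
  have htend : Tendsto (fun y => -(x * stdNormalPDF x * (ρ * x * stdNormalSurv ((y - ρ * x) / s)
      + s * stdNormalPDF ((y - ρ * x) / s)))) atTop (nhds 0) := by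
    have h4 := ((tendsto_surv_atTop.comp (tendsto_affine_atTop hs (ρ * x))).const_mul (ρ * x))
    have h5 := ((tendsto_phi_atTop.comp (tendsto_affine_atTop hs (ρ * x))).const_mul s)
    have := ((h4.add h5).const_mul (x * stdNormalPDF x)).neg
    simpa [Function.comp_def] using this
  have := integral_Ioi_of_hasDerivAt_of_tendsto
    ((hderiv v (mem_Ici.2 le_rfl)).continuousAt.continuousWithinAt)
    (fun y hy => hderiv y (mem_Ici.2 (le_of_lt hy))) hint htend
  rw [this]; ring

lemma inv_sqrt_two_pi_le_one : (Real.sqrt (2 * Real.pi))⁻¹ ≤ 1 := by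
  rw [inv_le_one_iff₀]
  right
  rw [show (1:ℝ) = Real.sqrt 1 from (Real.sqrt_one).symm]
  exact Real.sqrt_le_sqrt (by nlinarith [Real.pi_gt_three])

lemma tendsto_mul_phi_atTop : Tendsto (fun x => x * stdNormalPDF x) atTop (nhds 0) := by
  apply squeeze_zero_norm' ?_ (Real.tendsto_exp_neg_atTop_nhds_zero)
  filter_upwards [eventually_ge_atTop (4:ℝ)] with x hx
  have hx0 : (0:ℝ) < x := by linarith
  rw [Real.norm_eq_abs, abs_of_nonneg (mul_nonneg hx0.le (phi_nonneg x))]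
  unfold stdNormalPDF
  have h1 : x * ((Real.sqrt (2 * Real.pi))⁻¹ * Real.exp (-x ^ 2 / 2))
      ≤ x * Real.exp (-x ^ 2 / 2) := by
    have := mul_le_mul_of_nonneg_right inv_sqrt_two_pi_le_one (Real.exp_pos (-x^2/2)).le
    nlinarith [Real.exp_pos (-x^2/2)]
  have h2 : x * Real.exp (-x ^ 2 / 2) ≤ Real.exp x * Real.exp (-x ^ 2 / 2) := by
    have hxe : x ≤ Real.exp x := by
      have := Real.add_one_le_exp x; linarith
    nlinarith [Real.exp_pos (-x^2/2)]
  have h3 : Real.exp x * Real.exp (-x ^ 2 / 2) ≤ Real.exp (-x) := by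
    rw [← Real.exp_add]
    apply Real.exp_le_exp.2
    nlinarith
  linarith

lemma hasDerivAt_affine' (ρ v s : ℝ) (x : ℝ) :
    HasDerivAt (fun x : ℝ => (v - ρ * x) / s) (-ρ / s) x := by
  have h1 : HasDerivAt (fun x : ℝ => v - ρ * x) (-(ρ * 1)) x :=
    (((hasDerivAt_id x).const_mul ρ)).const_sub v
  simpa using h1.div_const s

lemma final_term {ρ s : ℝ} (hs : 0 < s) (hs2 : s ^ 2 = 1 - ρ ^ 2) (u v : ℝ) :
    stdNormalPDF v * (s * stdNormalPDF ((u - ρ * v) / s))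
      = (s / Real.sqrt (2 * Real.pi))
        * stdNormalPDF (Real.sqrt (u ^ 2 - 2 * ρ * u * v + v ^ 2) / s) := by
  have hs0 : s ≠ 0 := ne_of_gt hs
  have hq : 0 ≤ u ^ 2 - 2 * ρ * u * v + v ^ 2 := by
    nlinarith [sq_nonneg (u - ρ * v), sq_nonneg (s * v), hs2]
  have hsq : Real.sqrt (u ^ 2 - 2 * ρ * u * v + v ^ 2) ^ 2
      = u ^ 2 - 2 * ρ * u * v + v ^ 2 := Real.sq_sqrt hq
  have hexp : Real.exp (-v ^ 2 / 2) * Real.exp (-((u - ρ * v) / s) ^ 2 / 2)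
      = Real.exp (-(Real.sqrt (u ^ 2 - 2 * ρ * u * v + v ^ 2) / s) ^ 2 / 2) := by
    rw [← Real.exp_add, Real.exp_eq_exp, div_pow, div_pow, hsq]
    field_simp
    linear_combination (-v ^ 2) * hs2
  unfold stdNormalPDF
  linear_combination (s * (Real.sqrt (2 * Real.pi))⁻¹ * (Real.sqrt (2 * Real.pi))⁻¹) * hexp

/-- The truncated moment `m₁₁` identity for the standard bivariate
normal distribution with correlation `ρ ∈ (-1, 1)`. -/
theorem stmt_3 (ρ u v : ℝ) (hρ₁ : -1 < ρ) (hρ₂ : ρ < 1) :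
    (∫ x in Set.Ioi u, ∫ y in Set.Ioi v, x * y * bvnPDF ρ x y)
      = ρ * ell u v ρ
        + ρ * u * stdNormalPDF u * stdNormalSurv ((v - ρ * u) / Real.sqrt (1 - ρ ^ 2))
        + ρ * v * stdNormalPDF v * stdNormalSurv ((u - ρ * v) / Real.sqrt (1 - ρ ^ 2))
        + (Real.sqrt (1 - ρ ^ 2) / Real.sqrt (2 * Real.pi)) *
            stdNormalPDF (Real.sqrt (u ^ 2 - 2 * ρ * u * v + v ^ 2) / Real.sqrt (1 - ρ ^ 2)) := by
  have h1ρ : (0:ℝ) < 1 - ρ ^ 2 := by nlinarith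
  set s := Real.sqrt (1 - ρ ^ 2) with hs_def
  have hs : 0 < s := Real.sqrt_pos.2 h1ρ
  have hs2 : s ^ 2 = 1 - ρ ^ 2 := Real.sq_sqrt h1ρ.le
  have hs0 : s ≠ 0 := ne_of_gt hs
  -- The marginal-in-x density of the truncated region
  have hcont_h : Continuous (fun t : ℝ => stdNormalPDF t * stdNormalSurv ((v - ρ * t) / s)) :=
    continuous_phi.mul (continuous_surv.comp
      ((continuous_const.sub (continuous_const.mul continuous_id)).div_const s))
  have hint_h : Integrable (fun t : ℝ => stdNormalPDF t * stdNormalSurv ((v - ρ * t) / s)) := by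
    apply integrable_phi.mono' hcont_h.aestronglyMeasurable
    filter_upwards with t
    rw [Real.norm_eq_abs, abs_of_nonneg (mul_nonneg (phi_nonneg t) (surv_nonneg _))]
    calc stdNormalPDF t * stdNormalSurv ((v - ρ * t) / s)
        ≤ stdNormalPDF t * 1 :=
          mul_le_mul_of_nonneg_left (surv_le_one _) (phi_nonneg t)
      _ = stdNormalPDF t := mul_one _
  have hell : ell u v ρ = ∫ t in Ioi u, stdNormalPDF t * stdNormalSurv ((v - ρ * t) / s) := by
    unfold ell
    rw [show (fun x : ℝ => ∫ y in Ioi v, bvnPDF ρ x y)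
        = fun t : ℝ => stdNormalPDF t * stdNormalSurv ((v - ρ * t) / s) from
      funext (inner_prob hs hs2 v)]
  have hinner : (fun x : ℝ => ∫ y in Ioi v, x * y * bvnPDF ρ x y)
      = fun x : ℝ => ρ * x ^ 2 * stdNormalPDF x * stdNormalSurv ((v - ρ * x) / s)
          + s * x * stdNormalPDF x * stdNormalPDF ((v - ρ * x) / s) :=
    funext (inner_moment hs hs2 v)
  -- derivative of the antiderivative
  have hderivH : ∀ x : ℝ, HasDerivAt
      (fun x : ℝ => -(ρ * x * stdNormalPDF x * stdNormalSurv ((v - ρ * x) / s)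
        + ρ * (∫ t in Ioi x, stdNormalPDF t * stdNormalSurv ((v - ρ * t) / s))
        + stdNormalPDF v * (ρ * v * stdNormalSurv ((x - ρ * v) / s)
          + s * stdNormalPDF ((x - ρ * v) / s))))
      (ρ * x ^ 2 * stdNormalPDF x * stdNormalSurv ((v - ρ * x) / s)
        + s * x * stdNormalPDF x * stdNormalPDF ((v - ρ * x) / s)) x := by
    intro x
    have dSa : HasDerivAt (fun x : ℝ => stdNormalSurv ((v - ρ * x) / s))
        (-(stdNormalPDF ((v - ρ * x) / s)) * (-ρ / s)) x :=
      (hasDerivAt_surv _).comp x (hasDerivAt_affine' ρ v s x)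
    have d1 : HasDerivAt (fun x : ℝ => ρ * x * stdNormalPDF x * stdNormalSurv ((v - ρ * x) / s))
        ((ρ * 1 * stdNormalPDF x + ρ * x * (-x * stdNormalPDF x))
            * stdNormalSurv ((v - ρ * x) / s)
          + ρ * x * stdNormalPDF x * (-(stdNormalPDF ((v - ρ * x) / s)) * (-ρ / s))) x :=
      (((hasDerivAt_id x).const_mul ρ).mul (hasDerivAt_phi x)).mul dSa
    have d2 : HasDerivAt
        (fun x : ℝ => ρ * (∫ t in Ioi x, stdNormalPDF t * stdNormalSurv ((v - ρ * t) / s)))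
        (ρ * (-(stdNormalPDF x * stdNormalSurv ((v - ρ * x) / s)))) x :=
      (hasDerivAt_integral_Ioi hint_h hcont_h x).const_mul ρ
    have dSb : HasDerivAt (fun x : ℝ => stdNormalSurv ((x - ρ * v) / s))
        (-(stdNormalPDF ((x - ρ * v) / s)) * (1 / s)) x :=
      (hasDerivAt_surv _).comp x (hasDerivAt_affine ρ v s x)
    have dPb : HasDerivAt (fun x : ℝ => stdNormalPDF ((x - ρ * v) / s))
        (-((x - ρ * v) / s) * stdNormalPDF ((x - ρ * v) / s) * (1 / s)) x :=
      (hasDerivAt_phi _).comp x (hasDerivAt_affine ρ v s x)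
    have d3 : HasDerivAt (fun x : ℝ => stdNormalPDF v * (ρ * v * stdNormalSurv ((x - ρ * v) / s)
        + s * stdNormalPDF ((x - ρ * v) / s)))
        (stdNormalPDF v * (ρ * v * (-(stdNormalPDF ((x - ρ * v) / s)) * (1 / s))
          + s * (-((x - ρ * v) / s) * stdNormalPDF ((x - ρ * v) / s) * (1 / s)))) x :=
      ((dSb.const_mul (ρ * v)).add (dPb.const_mul s)).const_mul (stdNormalPDF v)
    have total := ((d1.add d2).add d3).neg
    convert total using 1
    · rfl
    · rfl
    · rfl
    have hE2 := phi_mul_phi hs hs2 x v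
    field_simp
    linear_combination (x * stdNormalPDF x * stdNormalPDF ((v - ρ * x) / s)) * hs2
      - x * hE2
  -- tendsto of the antiderivative
  have htendH : Tendsto
      (fun x : ℝ => -(ρ * x * stdNormalPDF x * stdNormalSurv ((v - ρ * x) / s)
        + ρ * (∫ t in Ioi x, stdNormalPDF t * stdNormalSurv ((v - ρ * t) / s))
        + stdNormalPDF v * (ρ * v * stdNormalSurv ((x - ρ * v) / s)
          + s * stdNormalPDF ((x - ρ * v) / s)))) atTop (nhds 0) := by
    have t1 : Tendsto (fun x : ℝ => ρ * x * stdNormalPDF x * stdNormalSurv ((v - ρ * x) / s))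
        atTop (nhds 0) := by
      have hb : Tendsto (fun x : ℝ => |ρ| * (x * stdNormalPDF x)) atTop (nhds 0) := by
        simpa using tendsto_mul_phi_atTop.const_mul |ρ|
      apply squeeze_zero_norm' ?_ hb
      filter_upwards [eventually_ge_atTop (0:ℝ)] with x hx
      rw [Real.norm_eq_abs, abs_mul, abs_mul, abs_mul, abs_of_nonneg (phi_nonneg x),
        abs_of_nonneg (surv_nonneg _), abs_of_nonneg hx]
      have h1 := surv_le_one ((v - ρ * x) / s)
      have h2 := surv_nonneg ((v - ρ * x) / s)
      nlinarith [phi_nonneg x, abs_nonneg ρ,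
        mul_nonneg (mul_nonneg (abs_nonneg ρ) hx) (phi_nonneg x)]
    have t2 : Tendsto (fun x : ℝ =>
        ρ * (∫ t in Ioi x, stdNormalPDF t * stdNormalSurv ((v - ρ * t) / s)))
        atTop (nhds 0) := by
      simpa using (tendsto_integral_Ioi hint_h).const_mul ρ
    have t3 : Tendsto (fun x : ℝ => stdNormalPDF v * (ρ * v * stdNormalSurv ((x - ρ * v) / s)
        + s * stdNormalPDF ((x - ρ * v) / s))) atTop (nhds 0) := by
      have hb := tendsto_affine_atTop hs (ρ * v)
      have u1 := (tendsto_surv_atTop.comp hb).const_mul (ρ * v)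
      have u2 := (tendsto_phi_atTop.comp hb).const_mul s
      have := (u1.add u2).const_mul (stdNormalPDF v)
      simpa [Function.comp_def] using this
    have := ((t1.add t2).add t3).neg
    simpa using this
  -- integrability of the integrand
  have hg_cont : Continuous (fun x : ℝ =>
      ρ * x ^ 2 * stdNormalPDF x * stdNormalSurv ((v - ρ * x) / s)
        + s * x * stdNormalPDF x * stdNormalPDF ((v - ρ * x) / s)) := by
    have ca : Continuous (fun x : ℝ => (v - ρ * x) / s) :=
      (continuous_const.sub (continuous_const.mul continuous_id)).div_const s
    exact ((((continuous_const.mul (continuous_pow 2)).mul continuous_phi).mul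
        (continuous_surv.comp ca)).add
      (((continuous_const.mul continuous_id).mul continuous_phi).mul (continuous_phi.comp ca)))
  have hg_int : IntegrableOn (fun x : ℝ =>
      ρ * x ^ 2 * stdNormalPDF x * stdNormalSurv ((v - ρ * x) / s)
        + s * x * stdNormalPDF x * stdNormalPDF ((v - ρ * x) / s)) (Ioi u) := by
    have hmaj : Integrable (fun x : ℝ => (|ρ| + s) * ((x ^ 2 + 1) * stdNormalPDF x)) := by
      apply ((integrable_sq_mul_phi.add integrable_phi).const_mul (|ρ| + s)).congr
      filter_upwards with x
      simp only [Pi.add_apply]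
      ring
    apply (hmaj.mono' hg_cont.aestronglyMeasurable ?_).integrableOn
    filter_upwards with x
    have hP := phi_nonneg x
    have hP1 := phi_le_one ((v - ρ * x) / s)
    have hP0 := phi_nonneg ((v - ρ * x) / s)
    have hQ1 := surv_le_one ((v - ρ * x) / s)
    have hQ0 := surv_nonneg ((v - ρ * x) / s)
    have habs : |x| ≤ x ^ 2 + 1 := by nlinarith [sq_nonneg (|x| - 1), sq_abs x, abs_nonneg x]
    rw [Real.norm_eq_abs]
    have hb1 : |ρ * x ^ 2 * stdNormalPDF x * stdNormalSurv ((v - ρ * x) / s)|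
        ≤ |ρ| * ((x ^ 2 + 1) * stdNormalPDF x) := by
      rw [abs_mul, abs_mul, abs_mul, abs_of_nonneg (sq_nonneg x), abs_of_nonneg hP,
        abs_of_nonneg hQ0]
      nlinarith [mul_nonneg (mul_nonneg (abs_nonneg ρ) (sq_nonneg x)) hP,
        mul_nonneg (abs_nonneg ρ) hP]
    have hb2 : |s * x * stdNormalPDF x * stdNormalPDF ((v - ρ * x) / s)|
        ≤ s * ((x ^ 2 + 1) * stdNormalPDF x) := by
      rw [abs_mul, abs_mul, abs_mul, abs_of_nonneg hs.le, abs_of_nonneg hP, abs_of_nonneg hP0]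
      nlinarith [mul_nonneg (mul_nonneg hs.le (abs_nonneg x)) hP, mul_nonneg hs.le hP]
    calc |ρ * x ^ 2 * stdNormalPDF x * stdNormalSurv ((v - ρ * x) / s)
          + s * x * stdNormalPDF x * stdNormalPDF ((v - ρ * x) / s)|
        ≤ |ρ * x ^ 2 * stdNormalPDF x * stdNormalSurv ((v - ρ * x) / s)|
          + |s * x * stdNormalPDF x * stdNormalPDF ((v - ρ * x) / s)| := abs_add_le _ _
      _ ≤ |ρ| * ((x ^ 2 + 1) * stdNormalPDF x) + s * ((x ^ 2 + 1) * stdNormalPDF x) :=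
          add_le_add hb1 hb2
      _ = (|ρ| + s) * ((x ^ 2 + 1) * stdNormalPDF x) := by ring
  have key := integral_Ioi_of_hasDerivAt_of_tendsto
    ((hderivH u).continuousAt.continuousWithinAt)
    (fun x _ => hderivH x) hg_int htendH
  rw [hinner, key, hell, ← final_term hs hs2 u v]
  ring
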